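/- arXiv:1302.0948 — 4 statements merged into one kernel-verified Lean document; each statement's English description precedes it below -/
import Mathlib

section
/- The Shapley value satisfies the efficiency axiom: for a finite set of players C and characteristic function v with v(∅) = 0, the sum over all players u ∈ C of φ_u(v) equals v(C), where φ_u(v) = Σ_{C' ⊆ C \ {u}} (|C'|! (|C| - |C'| - 1)! / |C|!)·(v(C' ∪ {u}) - v(C')). -/
open Finset

noncomputable def shapley {α : Type*} [DecidableEq α]
    (C : Finset α) (v : Finset α → ℝ) (u : α) : ℝ :=
  ∑ C' ∈ (C.erase u).powerset,
    ((C'.card.factorial * (C.card - C'.card - 1).factorial : ℕ) : ℝ) / (C.card.factorial : ℝ)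
      * (v (insert u C') - v C')

/-- Efficiency axiom: the Shapley values of all players sum to the value of the
grand coalition. -/
theorem shapley_efficiency {α : Type*} [DecidableEq α]
    (C : Finset α) (v : Finset α → ℝ) (h0 : v ∅ = 0) :
    ∑ u ∈ C, shapley C v u = v C := by
  classical
  rcases C.eq_empty_or_nonempty with rfl | hC
  · simpa using h0.symm
  set n := C.card with hn
  have hn1 : 1 ≤ n := Finset.card_pos.mpr hC
  set c : ℕ → ℝ := fun k =>
    ((k.factorial * (n - k - 1).factorial : ℕ) : ℝ) / (n.factorial : ℝ) with hc
  have hfacpos : (0:ℝ) < (n.factorial : ℝ) := by exact_mod_cast n.factorial_pos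
  have hsh : ∀ u, shapley C v u =
      (∑ S ∈ (C.erase u).powerset, c S.card * v (insert u S))
      - ∑ S ∈ (C.erase u).powerset, c S.card * v S := by
    intro u
    rw [shapley, ← Finset.sum_sub_distrib]
    exact Finset.sum_congr rfl fun S hS => by simp only [hc]; ring
  have hpow : ∀ u : α, (C.erase u).powerset = C.powerset.filter (fun S => u ∉ S) := by
    intro u; ext S
    simp [Finset.subset_erase, and_comm]
  -- positive part
  have hP : ∑ u ∈ C, ∑ S ∈ (C.erase u).powerset, c S.card * v (insert u S)
      = ∑ S ∈ C.powerset, (S.card : ℝ) * c (S.card - 1) * v S := by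
    have h1 : ∀ u ∈ C, ∑ S ∈ (C.erase u).powerset, c S.card * v (insert u S)
        = ∑ S ∈ C.powerset.filter (fun S => u ∈ S), c (S.card - 1) * v S := by
      intro u hu
      refine Finset.sum_bij' (fun S _ => insert u S) (fun S _ => S.erase u)
        ?_ ?_ ?_ ?_ ?_
      · intro S hS
        simp only [Finset.mem_powerset] at hS
        simp only [Finset.mem_filter, Finset.mem_powerset]
        exact ⟨Finset.insert_subset hu (hS.trans (Finset.erase_subset _ _)),
          Finset.mem_insert_self u S⟩
      · intro S hS
        simp only [Finset.mem_filter, Finset.mem_powerset] at hS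
        simpa [Finset.mem_powerset] using Finset.erase_subset_erase u hS.1
      · intro S hS
        simp only [Finset.mem_powerset] at hS
        have : u ∉ S := fun h => (Finset.mem_erase.mp (hS h)).1 rfl
        simp [Finset.erase_insert this]
      · intro S hS
        simp only [Finset.mem_filter] at hS
        exact Finset.insert_erase hS.2
      · intro S hS
        simp only [Finset.mem_powerset] at hS
        have hu' : u ∉ S := fun h => (Finset.mem_erase.mp (hS h)).1 rfl
        rw [Finset.card_insert_of_notMem hu']
        simp
    rw [Finset.sum_congr rfl h1]
    simp_rw [Finset.sum_filter]
    rw [Finset.sum_comm]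
    refine Finset.sum_congr rfl fun S hS => ?_
    rw [← Finset.sum_filter]
    have : C.filter (fun u => u ∈ S) = S := by
      rw [Finset.filter_mem_eq_inter, Finset.inter_eq_right]
      exact Finset.mem_powerset.mp hS
    rw [this, Finset.sum_const, nsmul_eq_mul]
    ring
  -- negative part
  have hN : ∑ u ∈ C, ∑ S ∈ (C.erase u).powerset, c S.card * v S
      = ∑ S ∈ C.powerset, ((n - S.card : ℕ) : ℝ) * c S.card * v S := by
    simp_rw [hpow, Finset.sum_filter]
    rw [Finset.sum_comm]
    refine Finset.sum_congr rfl fun S hS => ?_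
    rw [← Finset.sum_filter]
    have : C.filter (fun u => u ∉ S) = C \ S := (Finset.sdiff_eq_filter C S).symm
    rw [this, Finset.sum_const, nsmul_eq_mul,
      Finset.card_sdiff_of_subset (Finset.mem_powerset.mp hS)]
    ring
  calc ∑ u ∈ C, shapley C v u
      = (∑ u ∈ C, ∑ S ∈ (C.erase u).powerset, c S.card * v (insert u S))
        - ∑ u ∈ C, ∑ S ∈ (C.erase u).powerset, c S.card * v S := by
        rw [← Finset.sum_sub_distrib]
        exact Finset.sum_congr rfl fun u _ => hsh u
    _ = ∑ S ∈ C.powerset,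
          ((S.card : ℝ) * c (S.card - 1) - ((n - S.card : ℕ) : ℝ) * c S.card) * v S := by
        rw [hP, hN, ← Finset.sum_sub_distrib]
        exact Finset.sum_congr rfl fun S _ => by ring
    _ = v C := by
        rw [Finset.sum_eq_single_of_mem C (Finset.mem_powerset_self C)]
        · have h1 : n - n = 0 := Nat.sub_self n
          have h2 : (n:ℝ) * c (n - 1) = 1 := by
            rw [hc]
            simp only []
            rw [show n - (n-1) - 1 = 0 from by omega, Nat.factorial_zero, mul_one,
              mul_div_assoc', div_eq_one_iff_eq hfacpos.ne']
            exact_mod_cast Nat.mul_factorial_pred (Nat.one_le_iff_ne_zero.mp hn1)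
          rw [← hn, h1, h2]
          push_cast
          ring
        · intro S hS hSne
          rcases eq_or_ne S ∅ with rfl | hSne'
          · simp [h0]
          · have hk1 : 1 ≤ S.card := Finset.card_pos.mpr (Finset.nonempty_of_ne_empty hSne')
            have hkn : S.card < n :=
              Finset.card_lt_card (Finset.ssubset_iff_subset_ne.mpr
                ⟨Finset.mem_powerset.mp hS, hSne⟩)
            set k := S.card with hk
            have hnat : k * ((k-1).factorial * (n-k).factorial)
                = (n - k) * (k.factorial * (n - k - 1).factorial) := by
              have e1 : k * (k-1).factorial = k.factorial := Nat.mul_factorial_pred (Nat.one_le_iff_ne_zero.mp hk1)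
              have e2 : (n - k) * (n - k - 1).factorial = (n-k).factorial :=
                Nat.mul_factorial_pred (by omega)
              calc k * ((k-1).factorial * (n-k).factorial)
                  = (k * (k-1).factorial) * (n-k).factorial := by ring
                _ = k.factorial * (n-k).factorial := by rw [e1]
                _ = k.factorial * ((n-k) * (n-k-1).factorial) := by rw [e2]
                _ = (n - k) * (k.factorial * (n - k - 1).factorial) := by ring
            have key : (k:ℝ) * c (k - 1) = ((n - k : ℕ):ℝ) * c k := by
              rw [hc]
              simp only []
              rw [show n - (k-1) - 1 = n - k from by omega,
                mul_div_assoc', mul_div_assoc']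
              congr 1
              exact_mod_cast hnat
            rw [key, sub_self, zero_mul]
end

section
/- Strategy-resistance of the utility ψ_sp: define ψ_sp(σ, t) = Σ_{(s,p)∈σ, s ≤ t-1} min(p, t-s)·(t - (s + min(s+p-1, t-1))/2). Then for any schedule σ, start time s, processing times p₁, p₂ ≥ 1, and time t: ψ_sp(σ ∪ {(s,p₁)}, t) + ψ_sp(σ ∪ {(s+p₁,p₂)}, t) = ψ_sp(σ ∪ {(s,p₁+p₂)}, t) + ψ_sp(σ, t). -/
open Multiset

/-- The strategy-proof utility function `ψ_sp`. -/
noncomputable def psiSp (σ : Multiset (ℕ × ℕ)) (t : ℕ) : ℝ :=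
  ((σ.filter (fun j => j.1 < t)).map (fun j =>
    ((min j.2 (t - j.1) : ℕ) : ℝ) *
      ((t : ℝ) - (((j.1 : ℝ) + ((min (j.1 + j.2 - 1) (t - 1) : ℕ) : ℝ)) / 2)))).sum

private noncomputable def gSp (s p t : ℕ) : ℝ :=
  if s < t then
    ((min p (t - s) : ℕ) : ℝ) *
      ((t : ℝ) - (((s : ℝ) + ((min (s + p - 1) (t - 1) : ℕ) : ℝ)) / 2))
  else 0

private lemma psiSp_add (σ : Multiset (ℕ × ℕ)) (j : ℕ × ℕ) (t : ℕ) :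
    psiSp (σ + {j}) t = psiSp σ t + gSp j.1 j.2 t := by
  unfold psiSp gSp
  rw [Multiset.filter_add]
  by_cases h : j.1 < t
  · rw [Multiset.filter_singleton, if_pos h]
    simp [h]
  · rw [Multiset.filter_singleton, if_neg h, if_neg h]
    simp

/-- Strategy-resistance of psiSp: merging or splitting jobs does not change
the utility. -/
theorem psiSp_strategy_resistant (σ : Multiset (ℕ × ℕ)) (s p₁ p₂ t : ℕ)
    (hp₁ : 1 ≤ p₁) (hp₂ : 1 ≤ p₂) :
    psiSp (σ + {(s, p₁)}) t + psiSp (σ + {(s + p₁, p₂)}) t =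
      psiSp (σ + {(s, p₁ + p₂)}) t + psiSp σ t := by
  rw [psiSp_add, psiSp_add, psiSp_add]
  have key : gSp s p₁ t + gSp (s + p₁) p₂ t = gSp s (p₁ + p₂) t := by
    unfold gSp
    by_cases h1 : s < t
    · by_cases h2 : s + p₁ < t
      · rw [if_pos h1, if_pos h2, if_pos h1]
        have e1 : min p₁ (t - s) = p₁ := min_eq_left (by omega)
        have e2 : min (s + p₁ - 1) (t - 1) = s + p₁ - 1 := min_eq_left (by omega)
        by_cases h3 : s + p₁ + p₂ ≤ t
        · have e3 : min p₂ (t - (s + p₁)) = p₂ := min_eq_left (by omega)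
          have e4 : min (s + p₁ + p₂ - 1) (t - 1) = s + p₁ + p₂ - 1 :=
            min_eq_left (by omega)
          have e5 : min (p₁ + p₂) (t - s) = p₁ + p₂ := min_eq_left (by omega)
          have e6 : min (s + (p₁ + p₂) - 1) (t - 1) = s + p₁ + p₂ - 1 := by
            rw [show s + (p₁ + p₂) = s + p₁ + p₂ by ring]
            exact min_eq_left (by omega)
          rw [e1, e2, e3, e4, e5, e6]
          have c2 : ((s + p₁ - 1 : ℕ) : ℝ) = s + p₁ - 1 := by push_cast [Nat.cast_sub (by omega : 1 ≤ s + p₁)]; ring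
          have c4 : ((s + p₁ + p₂ - 1 : ℕ) : ℝ) = s + p₁ + p₂ - 1 := by push_cast [Nat.cast_sub (by omega : 1 ≤ s + p₁ + p₂)]; ring
          rw [c2, c4]; push_cast; ring
        · have e3 : min p₂ (t - (s + p₁)) = t - (s + p₁) := min_eq_right (by omega)
          have e4 : min (s + p₁ + p₂ - 1) (t - 1) = t - 1 := min_eq_right (by omega)
          have e5 : min (p₁ + p₂) (t - s) = t - s := min_eq_right (by omega)
          have e6 : min (s + (p₁ + p₂) - 1) (t - 1) = t - 1 := min_eq_right (by omega)
          rw [e1, e2, e3, e4, e5, e6]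
          have c2 : ((s + p₁ - 1 : ℕ) : ℝ) = s + p₁ - 1 := by push_cast [Nat.cast_sub (by omega : 1 ≤ s + p₁)]; ring
          have c3 : ((t - (s + p₁) : ℕ) : ℝ) = t - (s + p₁) := by push_cast [Nat.cast_sub (by omega : s + p₁ ≤ t)]; ring
          have c4 : ((t - 1 : ℕ) : ℝ) = t - 1 := by push_cast [Nat.cast_sub (by omega : 1 ≤ t)]; ring
          have c5 : ((t - s : ℕ) : ℝ) = t - s := by push_cast [Nat.cast_sub (by omega : s ≤ t)]; ring
          rw [c2, c3, c4, c5]; push_cast; ring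
      · rw [if_pos h1, if_neg h2, if_pos h1]
        have e1 : min p₁ (t - s) = t - s := min_eq_right (by omega)
        have e2 : min (s + p₁ - 1) (t - 1) = t - 1 := min_eq_right (by omega)
        have e5 : min (p₁ + p₂) (t - s) = t - s := min_eq_right (by omega)
        have e6 : min (s + (p₁ + p₂) - 1) (t - 1) = t - 1 := min_eq_right (by omega)
        rw [e1, e2, e5, e6]; ring
    · have h2 : ¬ s + p₁ < t := by omega
      rw [if_neg h1, if_neg h2, if_neg h1]; ring
  linarith [key]
end

section
/- For unit-size jobs, the number of jobs completed by any time t is the same for every greedy schedule. Formally: consider m machines and a finite set of unit-size jobs with release times r_j ∈ ℕ. A greedy schedule assigns to each time step t ∈ ℕ a set of jobs to start, such that each job starts at most once, no job starts before its release time, at most m jobs are started at each time step, and at every time step the number of started jobs is min(m, number of released-but-not-yet-started jobs). Then for any two greedy schedules σ₁, σ₂ and any time t, the number of jobs started strictly before t in σ₁ equals the number started strictly before t in σ₂. -/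
open Finset

/-- A greedy schedule for unit-size jobs on `m` machines: `start i` is the time
at which job `i` starts; no job starts before its release time, and at every
time step the number of started jobs is the minimum of `m` and the number of
released-but-not-yet-started jobs. -/
def GreedySchedule {ι : Type*} [Fintype ι] [DecidableEq ι]
    (m : ℕ) (r : ι → ℕ) (start : ι → ℕ) : Prop :=
  (∀ i, r i ≤ start i) ∧
  ∀ t : ℕ, (Finset.univ.filter (fun i => start i = t)).card =
    min m ((Finset.univ.filter (fun i => r i ≤ t ∧ t ≤ start i)).card)

/-- For unit-size jobs, the number of jobs completed by any time `t` is the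
same for every greedy schedule. -/
theorem greedy_unit_jobs_same_progress {ι : Type*} [Fintype ι] [DecidableEq ι]
    (m : ℕ) (hm : 1 ≤ m) (r : ι → ℕ) (start₁ start₂ : ι → ℕ)
    (h₁ : GreedySchedule m r start₁) (h₂ : GreedySchedule m r start₂) :
    ∀ t : ℕ, (Finset.univ.filter (fun i => start₁ i < t)).card =
      (Finset.univ.filter (fun i => start₂ i < t)).card := by
  obtain ⟨hr₁, hg₁⟩ := h₁
  obtain ⟨hr₂, hg₂⟩ := h₂
  intro t
  induction t with
  | zero => simp
  | succ t ih =>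
    have key : ∀ (s : ι → ℕ), (∀ i, r i ≤ s i) →
        (Finset.univ.filter (fun i => r i ≤ t ∧ t ≤ s i)).card =
        (Finset.univ.filter (fun i => r i ≤ t)).card -
        (Finset.univ.filter (fun i => s i < t)).card := by
      intro s hs
      have hsub : (Finset.univ.filter (fun i => s i < t)) ⊆
          (Finset.univ.filter (fun i => r i ≤ t)) := by
        intro i hi
        simp only [mem_filter, mem_univ, true_and] at *
        exact le_of_lt (lt_of_le_of_lt (hs i) hi)
      have heq : Finset.univ.filter (fun i => r i ≤ t ∧ t ≤ s i) =
          (Finset.univ.filter (fun i => r i ≤ t)) \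
          (Finset.univ.filter (fun i => s i < t)) := by
        ext i
        simp only [mem_filter, mem_sdiff, mem_univ, true_and, not_lt]
      rw [heq, card_sdiff_of_subset hsub]
    have split : ∀ (s : ι → ℕ),
        (Finset.univ.filter (fun i => s i < t + 1)).card =
        (Finset.univ.filter (fun i => s i < t)).card +
        (Finset.univ.filter (fun i => s i = t)).card := by
      intro s
      rw [← card_union_of_disjoint]
      · congr 1
        ext i
        simp only [mem_filter, mem_union, mem_univ, true_and]
        omega
      · rw [Finset.disjoint_left]
        intro i hi hi'
        simp only [mem_filter, mem_univ, true_and] at hi hi'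
        omega
    rw [split start₁, split start₂, hg₁ t, hg₂ t, key start₁ hr₁, key start₂ hr₂, ih]
end

section
/- For unit-size jobs, any two greedy schedules give the same total value: in every time step both schedules start the same number of jobs (proved by induction on t: if both greedy schedules have started the same number of jobs before time t, then the number of waiting jobs at t is equal in both, so both start min(m, #waiting) jobs at t). -/
open Finset

/-- Any two greedy schedules of unit-size jobs start the same number of jobs in
every time step; consequently any value function depending only on the multiset
of start times of jobs started before `t` gives both schedules the same value. -/
theorem greedy_unit_jobs_same_value {ι : Type*} [Fintype ι] [DecidableEq ι]
    (m : ℕ) (hm : 1 ≤ m) (r : ι → ℕ) (start₁ start₂ : ι → ℕ)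
    (h₁ : GreedySchedule m r start₁) (h₂ : GreedySchedule m r start₂) :
    (∀ t : ℕ, (Finset.univ.filter (fun i => start₁ i = t)).card =
        (Finset.univ.filter (fun i => start₂ i = t)).card) ∧
    (∀ t : ℕ, ∀ value : Multiset ℕ → ℝ,
      value (((Finset.univ.filter (fun i => start₁ i < t)).val).map start₁) =
        value (((Finset.univ.filter (fun i => start₂ i < t)).val).map start₂)) := by
  obtain ⟨hr₁, hc₁⟩ := h₁
  obtain ⟨hr₂, hc₂⟩ := h₂
  -- number of waiting jobs at time t
  have waiting : ∀ (start : ι → ℕ), (∀ i, r i ≤ start i) → ∀ t : ℕ,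
      (Finset.univ.filter (fun i => r i ≤ t ∧ t ≤ start i)).card =
      (Finset.univ.filter (fun i => r i ≤ t)).card -
        (Finset.univ.filter (fun i => start i < t)).card := by
    intro start hr t
    have hsub : (Finset.univ.filter (fun i => start i < t)) ⊆
        (Finset.univ.filter (fun i => r i ≤ t)) := by
      intro i hi
      simp only [mem_filter, mem_univ, true_and] at *
      have := hr i; omega
    have hset : (Finset.univ.filter (fun i => r i ≤ t ∧ t ≤ start i)) =
        (Finset.univ.filter (fun i => r i ≤ t)) \
          (Finset.univ.filter (fun i => start i < t)) := by
      ext i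
      simp only [mem_filter, mem_sdiff, mem_univ, true_and, not_lt]
    rw [hset, card_sdiff_of_subset hsub]
  have step : ∀ t : ℕ,
      (Finset.univ.filter (fun i => start₁ i < t)).card =
        (Finset.univ.filter (fun i => start₂ i < t)).card →
      (Finset.univ.filter (fun i => start₁ i = t)).card =
        (Finset.univ.filter (fun i => start₂ i = t)).card := by
    intro t h
    rw [hc₁ t, hc₂ t, waiting start₁ hr₁ t, waiting start₂ hr₂ t, h]
  have main : ∀ t : ℕ,
      ((Finset.univ.filter (fun i => start₁ i < t)).card =
        (Finset.univ.filter (fun i => start₂ i < t)).card) ∧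
      ((Finset.univ.filter (fun i => start₁ i = t)).card =
        (Finset.univ.filter (fun i => start₂ i = t)).card) := by
    intro t
    induction t with
    | zero =>
      refine ⟨by simp, step 0 (by simp)⟩
    | succ n ih =>
      have e : ∀ (f : ι → ℕ), (Finset.univ.filter (fun i => f i < n + 1)) =
          (Finset.univ.filter (fun i => f i < n)) ∪
            (Finset.univ.filter (fun i => f i = n)) := by
        intro f
        ext i
        simp only [mem_filter, mem_union, mem_univ, true_and]
        omega
      have d : ∀ (f : ι → ℕ), Disjoint (Finset.univ.filter (fun i => f i < n))
          (Finset.univ.filter (fun i => f i = n)) := by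
        intro f
        simp only [Finset.disjoint_left, mem_filter, mem_univ, true_and]
        omega
      have hlt : (Finset.univ.filter (fun i => start₁ i < n + 1)).card =
          (Finset.univ.filter (fun i => start₂ i < n + 1)).card := by
        rw [e start₁, e start₂, card_union_of_disjoint (d start₁),
          card_union_of_disjoint (d start₂), ih.1, ih.2]
      exact ⟨hlt, step _ hlt⟩
  refine ⟨fun t => (main t).2, fun t value => ?_⟩
  refine congrArg value ?_
  rw [Multiset.ext]
  intro a
  have key : ∀ (f : ι → ℕ),
      Multiset.count a (((Finset.univ.filter (fun i => f i < t)).val).map f) =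
      (Finset.univ.filter (fun i => f i = a ∧ a < t)).card := by
    intro f
    rw [Multiset.count_map]
    rw [← Finset.filter_val, Finset.filter_filter]
    show (Finset.univ.filter _).card = _
    apply Finset.card_bij (fun i _ => i)
    · intro i hi
      simp only [mem_filter, mem_univ, true_and] at *
      omega
    · intro i j hi hj h; exact h
    · intro i hi
      refine ⟨i, ?_, rfl⟩
      simp only [mem_filter, mem_univ, true_and] at *
      omega
  rw [key start₁, key start₂]
  by_cases h : a < t
  · have e : ∀ (f : ι → ℕ), (Finset.univ.filter (fun i => f i = a ∧ a < t)) =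
        (Finset.univ.filter (fun i => f i = a)) := by
      intro f; ext i; simp [h]
    rw [e start₁, e start₂]
    exact (main a).2
  · have e : ∀ (f : ι → ℕ), (Finset.univ.filter (fun i => f i = a ∧ a < t)) = ∅ := by
      intro f; ext i; simp [h]
    rw [e start₁, e start₂]
end
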